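/- For natural numbers k ≥ 1, n ≥ 1, and 1 ≤ a ≤ n, the quantity C(3n,a)*C(ka,3a)*C(kn,a)/C(3kn,3a) is less than (e^5 * k * a / (9n))^a. -/

import Mathlib

lemma aux_pow_le_pow_mul_choose : ∀ (r m : ℕ), r ≤ m → m ^ r ≤ r ^ r * m.choose r := by
  intro r
  induction r with
  | zero => simp
  | succ r ih =>
    intro m hm
    obtain ⟨m', rfl⟩ : ∃ m', m = m' + 1 := ⟨m - 1, by omega⟩
    have hrm : r ≤ m' := by omega
    have key : (m' + 1) ^ r ≤ (r + 1) ^ r * m'.choose r := by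
      rcases Nat.eq_zero_or_pos r with rfl | hr
      · simp
      · have h1 : ((m' + 1) * r) ^ r ≤ ((r + 1) * m') ^ r :=
          Nat.pow_le_pow_left (by nlinarith) r
        have h2 : (r + 1) ^ r * m' ^ r ≤ (r + 1) ^ r * (r ^ r * m'.choose r) :=
          Nat.mul_le_mul_left _ (ih m' hrm)
        have h3 : (m' + 1) ^ r * r ^ r ≤ (r + 1) ^ r * m'.choose r * r ^ r := by
          calc (m' + 1) ^ r * r ^ r = ((m' + 1) * r) ^ r := (Nat.mul_pow _ _ _).symm
            _ ≤ ((r + 1) * m') ^ r := h1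
            _ = (r + 1) ^ r * m' ^ r := Nat.mul_pow _ _ _
            _ ≤ (r + 1) ^ r * (r ^ r * m'.choose r) := h2
            _ = (r + 1) ^ r * m'.choose r * r ^ r := by ring
        exact Nat.le_of_mul_le_mul_right h3 (by positivity)
    have hid : (m' + 1) * m'.choose r = (m' + 1).choose (r + 1) * (r + 1) :=
      Nat.add_one_mul_choose_eq m' r
    calc (m' + 1) ^ (r + 1) = (m' + 1) ^ r * (m' + 1) := by ring
      _ ≤ ((r + 1) ^ r * m'.choose r) * (m' + 1) := Nat.mul_le_mul_right _ key
      _ = (r + 1) ^ r * ((m' + 1) * m'.choose r) := by ring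
      _ = (r + 1) ^ r * ((m' + 1).choose (r + 1) * (r + 1)) := by rw [hid]
      _ = (r + 1) ^ (r + 1) * (m' + 1).choose (r + 1) := by ring

lemma aux_div_pow_le_choose (r m : ℕ) (hr : 1 ≤ r) (hrm : r ≤ m) :
    ((m : ℝ) / r) ^ r ≤ m.choose r := by
  have hrpos : (0:ℝ) < (r:ℝ) ^ r := by positivity
  rw [div_pow, div_le_iff₀ hrpos]
  have := aux_pow_le_pow_mul_choose r m hrm
  exact_mod_cast by nlinarith [this]

lemma aux_pow_lt_factorial_mul (r : ℕ) (hr : 1 ≤ r) :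
    ((r:ℝ)) ^ r < (r.factorial : ℝ) * Real.exp 1 ^ r := by
  have hx : (0:ℝ) ≤ (r:ℝ) := by positivity
  have hsum : ∑ i ∈ Finset.range (r + 1), (r:ℝ) ^ i / i.factorial ≤ Real.exp r :=
    Real.sum_le_exp_of_nonneg hx (r + 1)
  have hsplit : ∑ i ∈ Finset.range (r + 1), (r:ℝ) ^ i / i.factorial
      = (∑ i ∈ Finset.range r, (r:ℝ) ^ i / i.factorial) + (r:ℝ) ^ r / r.factorial :=
    Finset.sum_range_succ _ r
  have h0 : (1:ℝ) ≤ ∑ i ∈ Finset.range r, (r:ℝ) ^ i / i.factorial := by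
    have := Finset.single_le_sum (f := fun i => (r:ℝ) ^ i / i.factorial)
      (fun i _ => by positivity) (Finset.mem_range.mpr hr)
    simpa using this
  have hlt : (r:ℝ) ^ r / r.factorial < Real.exp r := by
    nlinarith [hsum, hsplit, h0]
  have hfac : (0:ℝ) < (r.factorial : ℝ) := by exact_mod_cast r.factorial_pos
  rw [div_lt_iff₀ hfac] at hlt
  calc ((r:ℝ)) ^ r < Real.exp r * r.factorial := hlt
    _ = (r.factorial : ℝ) * Real.exp 1 ^ r := by
        rw [← Real.exp_one_rpow (r:ℝ), Real.rpow_natCast]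
        ring

lemma aux_choose_lt (r m : ℕ) (hr : 1 ≤ r) (hm : 1 ≤ m) :
    (m.choose r : ℝ) < (Real.exp 1 * m / r) ^ r := by
  have h1 : (m.choose r : ℝ) ≤ (m:ℝ) ^ r / r.factorial := Nat.choose_le_pow_div r m
  have h2 := aux_pow_lt_factorial_mul r hr
  have hfac : (0:ℝ) < (r.factorial : ℝ) := by exact_mod_cast r.factorial_pos
  have hrpos : (0:ℝ) < (r:ℝ) := by exact_mod_cast hr
  have hmpos : (0:ℝ) < (m:ℝ) := by exact_mod_cast hm
  have key : (m:ℝ) ^ r / r.factorial < (Real.exp 1 * m / r) ^ r := by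
    rw [div_pow, mul_pow, div_lt_div_iff₀ hfac (by positivity)]
    have hp : (0:ℝ) < (m:ℝ) ^ r := by positivity
    calc (m:ℝ) ^ r * (r:ℝ) ^ r < (m:ℝ) ^ r * ((r.factorial : ℝ) * Real.exp 1 ^ r) :=
          (mul_lt_mul_iff_right₀ hp).mpr h2
      _ = Real.exp 1 ^ r * (m:ℝ) ^ r * r.factorial := by ring
  exact lt_of_le_of_lt h1 key

/-- `C(3n,a) C(ka,3a) C(kn,a) / C(3kn,3a) < (e^5 k a / (9n))^a`. -/
theorem unstable_probability_bound (k n a : ℕ) (hk : 1 ≤ k) (hn : 1 ≤ n)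
    (ha1 : 1 ≤ a) (han : a ≤ n) (hka : 3 * a ≤ k * a) :
    ((3 * n).choose a : ℝ) * ((k * a).choose (3 * a) : ℝ) * ((k * n).choose a : ℝ) /
        ((3 * k * n).choose (3 * a) : ℝ)
      < (Real.exp 1 ^ 5 * k * a / (9 * n)) ^ a := by
  have hE : (0:ℝ) < Real.exp 1 := Real.exp_pos 1
  have haR : (0:ℝ) < (a:ℝ) := by exact_mod_cast ha1
  have hnR : (0:ℝ) < (n:ℝ) := by exact_mod_cast hn
  have hkR : (0:ℝ) < (k:ℝ) := by exact_mod_cast hk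
  have hA := aux_choose_lt a (3 * n) ha1 (by omega)
  have hB := aux_choose_lt (3 * a) (k * a) (by omega) (by nlinarith)
  have hC := aux_choose_lt a (k * n) ha1 (by nlinarith)
  have hD := aux_div_pow_le_choose (3 * a) (3 * k * n) (by omega) (by nlinarith)
  push_cast at hA hB hC hD
  set U1 : ℝ := (Real.exp 1 * (3 * n) / a) ^ a with hU1
  set U2 : ℝ := (Real.exp 1 * (k * a) / (3 * a)) ^ (3 * a) with hU2
  set U3 : ℝ := (Real.exp 1 * (k * n) / a) ^ a with hU3
  set L : ℝ := ((3 * (k:ℝ) * n) / (3 * a)) ^ (3 * a) with hL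
  have hLpos : (0:ℝ) < L := by rw [hL]; positivity
  have hDpos : (0:ℝ) < ((3 * k * n).choose (3 * a) : ℝ) := lt_of_lt_of_le hLpos hD
  have n2 : (0:ℝ) ≤ ((k * a).choose (3 * a) : ℝ) := by positivity
  have n3 : (0:ℝ) ≤ ((k * n).choose a : ℝ) := by positivity
  have p1 : (0:ℝ) < U1 := by rw [hU1]; positivity
  have p2 : (0:ℝ) < U2 := by rw [hU2]; positivity
  have hprod : ((3 * n).choose a : ℝ) * ((k * a).choose (3 * a) : ℝ) * ((k * n).choose a : ℝ)
      < U1 * U2 * U3 := by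
    calc ((3 * n).choose a : ℝ) * ((k * a).choose (3 * a) : ℝ) * ((k * n).choose a : ℝ)
        ≤ U1 * U2 * ((k * n).choose a : ℝ) :=
          mul_le_mul_of_nonneg_right (mul_le_mul hA.le hB.le n2 p1.le) n3
      _ < U1 * U2 * U3 := (mul_lt_mul_iff_right₀ (mul_pos p1 p2)).mpr hC
  have step1 : ((3 * n).choose a : ℝ) * ((k * a).choose (3 * a) : ℝ) * ((k * n).choose a : ℝ) /
        ((3 * k * n).choose (3 * a) : ℝ) ≤
      ((3 * n).choose a : ℝ) * ((k * a).choose (3 * a) : ℝ) * ((k * n).choose a : ℝ) / L := by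
    gcongr
  have step2 : ((3 * n).choose a : ℝ) * ((k * a).choose (3 * a) : ℝ) * ((k * n).choose a : ℝ) / L
      < U1 * U2 * U3 / L := by gcongr
  have heq : U1 * U2 * U3 / L = (Real.exp 1 ^ 5 * k * a / (9 * n)) ^ a := by
    rw [hU1, hU2, hU3, hL, pow_mul, pow_mul, ← mul_pow, ← mul_pow, ← div_pow]
    congr 1
    field_simp
    norm_num
  calc ((3 * n).choose a : ℝ) * ((k * a).choose (3 * a) : ℝ) * ((k * n).choose a : ℝ) /
        ((3 * k * n).choose (3 * a) : ℝ)
      ≤ _ / L := step1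
    _ < U1 * U2 * U3 / L := step2
    _ = _ := heq
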